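/- Let H be a real Hilbert space, J : H → ℝ Fréchet differentiable and bounded below, with |DJ(u+v)d − DJ(u)d| ≤ L‖v‖‖d‖ for all u, v, d. Let (u⁽ᵐ⁾) be a sequence with corrections d⁽ᵐ⁾ = u⁽ᵐ⁺¹⁾ − u⁽ᵐ⁾ ≠ 0 satisfying (i) the minimality property J(u⁽ᵐ⁺¹⁾) ≤ J(u⁽ᵐ⁾ − α μₘ d⁽ᵐ⁾) for the specific step α = μₘ DJ(u⁽ᵐ⁾)d⁽ᵐ⁾/(L‖d⁽ᵐ⁾‖²), μₘ = sign(DJ(u⁽ᵐ⁾)d⁽ᵐ⁾), and (ii) the angle condition |DJ(u⁽ᵐ⁾)d⁽ᵐ⁾| ≥ ε_θ ‖d⁽ᵐ⁾‖ ‖DJ(u⁽ᵐ⁾)‖ for a fixed 0 < ε_θ < 1. Then ‖DJ(u⁽ᵐ⁾)‖ → 0 as m → ∞. -/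

import Mathlib

open Filter intervalIntegral

lemma descent {H : Type*} [NormedAddCommGroup H] [InnerProductSpace ℝ H]
    (J : H → ℝ) (J' : H → H →L[ℝ] ℝ) (hJ : ∀ u, HasFDerivAt J (J' u) u)
    (L : ℝ) (hL : 0 < L)
    (hLip : ∀ u v d : H, |J' (u + v) d - J' u d| ≤ L * ‖v‖ * ‖d‖)
    (u v : H) : J (u + v) ≤ J u + J' u v + L / 2 * ‖v‖ ^ 2 := by
  have hderiv : ∀ t ∈ Set.uIcc (0:ℝ) 1,
      HasDerivAt (fun t : ℝ => J (u + t • v)) (J' (u + t • v) v) t := by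
    intro t _
    have h1 : HasDerivAt (fun t : ℝ => u + t • v) v t := by
      simpa using ((hasDerivAt_id t).smul_const v).const_add u
    exact (hJ (u + t • v)).comp_hasDerivAt t h1
  have hcont : Continuous fun t : ℝ => J' (u + t • v) v := by
    have hlip : LipschitzWith (Real.toNNReal (L * ‖v‖ ^ 2))
        (fun t : ℝ => J' (u + t • v) v) := by
      apply LipschitzWith.of_dist_le_mul
      intro t s
      have h := hLip (u + s • v) ((t - s) • v) v
      have he : u + s • v + (t - s) • v = u + t • v := by
        rw [add_assoc, ← add_smul]; ring_nf
      rw [he] at h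
      rw [Real.dist_eq, Real.dist_eq]
      calc |J' (u + t • v) v - J' (u + s • v) v| ≤ L * ‖(t - s) • v‖ * ‖v‖ := h
        _ = L * ‖v‖ ^ 2 * |t - s| := by
            rw [norm_smul, Real.norm_eq_abs]; ring
        _ ≤ (Real.toNNReal (L * ‖v‖ ^ 2)) * |t - s| := by
            gcongr
            exact Real.le_coe_toNNReal _
    exact hlip.continuous
  have hint : IntervalIntegrable (fun t : ℝ => J' (u + t • v) v)
      MeasureTheory.volume 0 1 := hcont.intervalIntegrable _ _
  have key : J (u + v) - J u = ∫ t in (0:ℝ)..1, J' (u + t • v) v := by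
    have := intervalIntegral.integral_eq_sub_of_hasDerivAt hderiv hint
    simp at this
    rw [this]
  have hmono : ∫ t in (0:ℝ)..1, J' (u + t • v) v ≤
      ∫ t in (0:ℝ)..1, (J' u v + L * ‖v‖ ^ 2 * t) := by
    apply intervalIntegral.integral_mono_on (by norm_num) hint
    · exact (Continuous.intervalIntegrable (by continuity) _ _)
    · intro t ht
      have h := hLip u (t • v) v
      have : J' (u + t • v) v - J' u v ≤ L * ‖t • v‖ * ‖v‖ := (abs_le.mp h).2
      have ht0 : 0 ≤ t := ht.1
      rw [norm_smul, Real.norm_eq_abs, abs_of_nonneg ht0] at this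
      nlinarith [this]
  have hval : ∫ t in (0:ℝ)..1, (J' u v + L * ‖v‖ ^ 2 * t) =
      J' u v + L / 2 * ‖v‖ ^ 2 := by
    rw [intervalIntegral.integral_add (intervalIntegrable_const)
      ((intervalIntegrable_id).const_mul _)]
    rw [intervalIntegral.integral_const_mul]
    simp [integral_id]
    ring
  linarith [key ▸ hmono.trans_eq hval]

/-- Theorem 2.1: convergence of the gradient in the Adaptive Inversion algorithm. -/
theorem stmt2 {H : Type*} [NormedAddCommGroup H] [InnerProductSpace ℝ H] [CompleteSpace H]
    (J : H → ℝ) (J' : H → H →L[ℝ] ℝ) (hJ : ∀ u, HasFDerivAt J (J' u) u)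
    (L C : ℝ) (hL : 0 < L)
    (hLip : ∀ u v d : H, |J' (u + v) d - J' u d| ≤ L * ‖v‖ * ‖d‖)
    (hbd : ∀ u, C ≤ J u)
    (εθ : ℝ) (hεθ : 0 < εθ) (hεθ1 : εθ < 1)
    (u : ℕ → H) (hd : ∀ m, u (m + 1) - u m ≠ 0)
    (hmin : ∀ m,
      J (u (m + 1)) ≤
        J (u m -
          (Real.sign (J' (u m) (u (m + 1) - u m)) * J' (u m) (u (m + 1) - u m) /
              (L * ‖u (m + 1) - u m‖ ^ 2)) •
            Real.sign (J' (u m) (u (m + 1) - u m)) • (u (m + 1) - u m)))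
    (hangle : ∀ m, εθ * ‖u (m + 1) - u m‖ * ‖J' (u m)‖ ≤ |J' (u m) (u (m + 1) - u m)|) :
    Tendsto (fun m => ‖J' (u m)‖) atTop (nhds 0) := by
  set c : ℝ := εθ ^ 2 / (2 * L) with hc
  have hcpos : 0 < c := by positivity
  -- per-step decrease
  have step : ∀ m, J (u (m + 1)) + c * ‖J' (u m)‖ ^ 2 ≤ J (u m) := by
    intro m
    set d : H := u (m + 1) - u m with hdd
    set g : ℝ := J' (u m) d with hg
    have hdnorm : 0 < ‖d‖ := norm_pos_iff.mpr (hd m)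
    by_cases hg0 : g = 0
    · -- gradient vanishes
      have hJ0 : ‖J' (u m)‖ = 0 := by
        have h := hangle m
        rw [← hdd, ← hg, hg0, abs_zero] at h
        exact le_antisymm (by nlinarith [mul_pos hεθ hdnorm]) (norm_nonneg _)
      have := hmin m
      rw [← hdd, ← hg, hg0] at this
      simp at this
      rw [hJ0]
      simpa using this
    · have hsign : Real.sign g * Real.sign g = 1 := by
        rcases lt_or_gt_of_ne hg0 with h | h
        · rw [Real.sign_of_neg h]; norm_num
        · rw [Real.sign_of_pos h]; norm_num
      -- rewrite the trial point
      have hs : (Real.sign g * g / (L * ‖d‖ ^ 2)) * Real.sign g = g / (L * ‖d‖ ^ 2) := by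
        rw [div_mul_eq_mul_div, mul_right_comm, hsign, one_mul]
      have hpt : u m - (Real.sign g * g / (L * ‖d‖ ^ 2)) • Real.sign g • d
          = u m + (-(g / (L * ‖d‖ ^ 2))) • d := by
        rw [smul_smul, hs, sub_eq_add_neg, ← neg_smul]
      have hdes := descent J J' hJ L hL hLip (u m) ((-(g / (L * ‖d‖ ^ 2))) • d)
      have hmin' := hmin m
      rw [← hdd, ← hg, hpt] at hmin'
      have hLd : 0 < L * ‖d‖ ^ 2 := by positivity
      have hlin : J' (u m) ((-(g / (L * ‖d‖ ^ 2))) • d) = -(g / (L * ‖d‖ ^ 2)) * g := by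
        rw [map_smul]; rfl
      have hnrm : ‖(-(g / (L * ‖d‖ ^ 2))) • d‖ ^ 2 = (g / (L * ‖d‖ ^ 2)) ^ 2 * ‖d‖ ^ 2 := by
        rw [norm_smul]
        rw [Real.norm_eq_abs, mul_pow, sq_abs, neg_pow]
        ring
      rw [hlin, hnrm] at hdes
      -- J(u(m+1)) ≤ J(u m) - g²/(2 L ‖d‖²)
      have hkey : J (u (m + 1)) ≤ J (u m) - g ^ 2 / (2 * (L * ‖d‖ ^ 2)) := by
        refine hmin'.trans (hdes.trans (le_of_eq ?_))
        field_simp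
        ring
      -- angle condition
      have hang := hangle m
      rw [← hdd, ← hg] at hang
      have hang2 : (εθ * ‖d‖ * ‖J' (u m)‖) ^ 2 ≤ g ^ 2 := by
        rw [← sq_abs g]
        exact pow_le_pow_left₀ (by positivity) hang 2
      have : c * ‖J' (u m)‖ ^ 2 ≤ g ^ 2 / (2 * (L * ‖d‖ ^ 2)) := by
        rw [hc, div_mul_eq_mul_div, div_le_div_iff₀ (by positivity) (by positivity)]
        nlinarith [mul_le_mul_of_nonneg_right hang2
          (le_of_lt (by positivity : (0:ℝ) < 2 * L))]
      linarith
  -- telescoping bound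
  have htel : ∀ n, (∑ m ∈ Finset.range n, c * ‖J' (u m)‖ ^ 2) ≤ J (u 0) - C := by
    intro n
    have : (∑ m ∈ Finset.range n, c * ‖J' (u m)‖ ^ 2) ≤ J (u 0) - J (u n) := by
      induction n with
      | zero => simp
      | succ k ih =>
        rw [Finset.sum_range_succ]
        have := step k
        linarith
    linarith [hbd (u n)]
  have hsum : Summable (fun m => c * ‖J' (u m)‖ ^ 2) :=
    summable_of_sum_range_le (fun m => by positivity) htel
  have hsum2 : Summable (fun m => ‖J' (u m)‖ ^ 2) := by
    have := hsum.div_const c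
    simpa [mul_div_cancel_left₀, ne_of_gt hcpos, mul_comm, mul_div_assoc] using this
  have h0 : Tendsto (fun m => ‖J' (u m)‖ ^ 2) atTop (nhds 0) := hsum2.tendsto_atTop_zero
  have hfin := (Real.continuous_sqrt.tendsto 0).comp h0
  rw [Real.sqrt_zero] at hfin
  have heq : (fun m => ‖J' (u m)‖) = fun m => Real.sqrt (‖J' (u m)‖ ^ 2) :=
    funext fun m => (Real.sqrt_sq (norm_nonneg _)).symm
  rw [heq]
  simpa [Function.comp_def] using hfin
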